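/- Let n ≥ 1, L > 0, μ ≤ 0, and let f : ℝⁿ → ℝ belong to F_{μ,L}. Assume the set X⋆ of global minimizers of f is nonempty, with minimum value f⋆, and let X = {x : f(x) ≤ f(x¹)} for some x¹ ∈ ℝⁿ. If f satisfies the PL inequality with constant μ_p > 0 on X, then f has quadratic functional growth with constant μ_q = μ_p on X; that is, (μ_p/2) d_{X⋆}(x)² ≤ f(x) − f⋆ for all x ∈ X. -/

import Mathlib

open Set Filter
open scoped RealInnerProductSpace Topology

theorem stmt_10 (n : ℕ) (hn : 1 ≤ n)
    (f : EuclideanSpace ℝ (Fin n) → ℝ)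
    (f' : EuclideanSpace ℝ (Fin n) → EuclideanSpace ℝ (Fin n))
    (L μ : ℝ) (hL : 0 < L) (hμ : μ ≤ 0)
    (hgrad : ∀ x, HasGradientAt f (f' x) x)
    (hupper : ConvexOn ℝ univ (fun x => L / 2 * ‖x‖ ^ 2 - f x))
    (hlower : ConvexOn ℝ univ (fun x => f x - μ / 2 * ‖x‖ ^ 2))
    (xs : EuclideanSpace ℝ (Fin n)) (hxs : ∀ z, f xs ≤ f z)
    (x1 : EuclideanSpace ℝ (Fin n))
    (μp : ℝ) (hμp : 0 < μp)
    (hPL : ∀ x, f x ≤ f x1 → f x - f xs ≤ 1 / (2 * μp) * ‖f' x‖ ^ 2) :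
    ∀ x, f x ≤ f x1 →
      μp / 2 * (Metric.infDist x {y | ∀ z, f y ≤ f z}) ^ 2 ≤ f x - f xs := by
  intro x hx
  set m : ℝ := f xs with hm
  have hfc : Continuous f := by
    rw [continuous_iff_continuousAt]
    exact fun z => (hgrad z).differentiableAt.continuousAt
  have hnn : ∀ z, 0 ≤ f z - m := fun z => sub_nonneg.2 (hxs z)
  set g : EuclideanSpace ℝ (Fin n) → ℝ := fun z => Real.sqrt (f z - m) with hg
  have hgc : Continuous g := (Real.continuous_sqrt).comp (hfc.sub continuous_const)
  set c : ℝ := Real.sqrt (μp / 2) with hc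
  have hcpos : 0 < c := Real.sqrt_pos.2 (by linarith)
  set d : ℝ := Metric.infDist x {y | ∀ z, f y ≤ f z} with hd
  have hdnn : 0 ≤ d := Metric.infDist_nonneg
  -- main estimate: for every 0 < c' < c, c' * d ≤ g x
  have key : ∀ c' : ℝ, 0 < c' → c' < c → c' * d ≤ g x := by
    intro c' hc'0 hc'c
    set φ : EuclideanSpace ℝ (Fin n) → ℝ := fun z => g z + c' * dist z x with hφ
    have hφc : Continuous φ :=
      hgc.add (continuous_const.mul (continuous_id.dist continuous_const))
    have hcoer : Tendsto φ (cocompact (EuclideanSpace ℝ (Fin n))) atTop := by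
      have h1 : Tendsto (fun z => c' * dist z x) (cocompact (EuclideanSpace ℝ (Fin n)))
          atTop :=
        (tendsto_const_mul_atTop_of_pos hc'0).2 (tendsto_dist_right_cocompact_atTop x)
      refine tendsto_atTop_mono (fun z => ?_) h1
      simp only [hφ]
      linarith [Real.sqrt_nonneg (f z - m)]
    obtain ⟨y, hy⟩ := hφc.exists_forall_le hcoer
    -- y satisfies the Ekeland-type inequality
    have hyx : φ y ≤ g x := by
      have := hy x
      simp only [hφ, dist_self, mul_zero, add_zero] at this
      exact this
    have hgyx : g y ≤ g x := by
      have : 0 ≤ c' * dist y x := mul_nonneg hc'0.le dist_nonneg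
      simp only [hφ] at hyx; linarith
    have hfyx : f y ≤ f x := by
      have := (Real.sqrt_le_sqrt_iff (hnn x)).1 hgyx
      linarith
    -- claim: f y = m
    have hgy0 : f y = m := by
      by_contra hne
      have hfy : 0 < f y - m := lt_of_le_of_ne (hnn y) (fun h => hne (by linarith))
      have hgypos : 0 < g y := Real.sqrt_pos.2 hfy
      set u : EuclideanSpace ℝ (Fin n) := f' y with hu
      have hPLy : f y - m ≤ 1 / (2 * μp) * ‖u‖ ^ 2 := hPL y (le_trans hfyx hx)
      have hune : u ≠ 0 := by
        intro h0
        rw [h0] at hPLy; simp at hPLy; linarith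
      have hunorm : 0 < ‖u‖ := norm_pos_iff.2 hune
      set v : EuclideanSpace ℝ (Fin n) := -(‖u‖⁻¹ • u) with hv
      have hvnorm : ‖v‖ = 1 := by
        simp [hv, norm_smul, abs_of_nonneg (inv_nonneg.2 hunorm.le),
          inv_mul_cancel₀ (ne_of_gt hunorm)]
      -- derivative of t ↦ g (y + t • v) at 0
      set ψ : ℝ → ℝ := fun t => g (y + t • v) with hψ
      have hline : HasDerivAt (fun t : ℝ => y + t • v) v 0 := by
        simpa using ((hasDerivAt_id (0 : ℝ)).smul_const v).const_add y
      have hfd : HasDerivAt (fun t : ℝ => f (y + t • v)) ⟪u, v⟫ 0 := by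
        have hF : HasFDerivAt f (InnerProductSpace.toDual ℝ _ u) (y + (0:ℝ) • v) := by
          simp only [zero_smul, add_zero]
          exact (hgrad y).hasFDerivAt
        have h := hF.comp_hasDerivAt (0:ℝ) hline
        simpa only [InnerProductSpace.toDual_apply_apply, Function.comp_def] using h
      have hψd : HasDerivAt ψ (1 / (2 * Real.sqrt (f y - m)) * ⟪u, v⟫) 0 := by
        have hsub : HasDerivAt (fun t : ℝ => f (y + t • v) - m) ⟪u, v⟫ 0 :=
          hfd.sub_const m
        have houter : HasDerivAt Real.sqrt (1 / (2 * Real.sqrt (f y - m)))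
            ((fun t : ℝ => f (y + t • v) - m) 0) := by
          simp only [zero_smul, add_zero]
          exact Real.hasDerivAt_sqrt (ne_of_gt hfy)
        have := houter.comp (0:ℝ) hsub
        simpa only [hψ, hg, Function.comp_def, mul_comm] using this
      have hiv : ⟪u, v⟫ = -‖u‖ := by
        rw [hv, inner_neg_right, real_inner_smul_right, real_inner_self_eq_norm_sq]
        field_simp
      -- one-sided slope bound
      have hslope : ∀ t : ℝ, 0 < t → -c' ≤ (ψ t - ψ 0) / t := by
        intro t ht
        have hmin := hy (y + t • v)
        have hdist : dist (y + t • v) x ≤ dist y x + t := by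
          calc dist (y + t • v) x ≤ dist (y + t • v) y + dist y x := dist_triangle _ _ _
            _ = ‖t • v‖ + dist y x := by rw [dist_eq_norm]; simp
            _ = t + dist y x := by rw [norm_smul, hvnorm]; simp [abs_of_pos ht]
            _ = dist y x + t := by ring
        have hkey : g y + c' * dist y x ≤ g (y + t • v) + c' * (dist y x + t) := by
          calc g y + c' * dist y x = φ y := rfl
            _ ≤ φ (y + t • v) := hmin
            _ ≤ g (y + t • v) + c' * (dist y x + t) := by
                simp only [hφ]
                have := mul_le_mul_of_nonneg_left hdist hc'0.le
                linarith
        have hψ0 : ψ 0 = g y := by simp [hψ]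
        rw [le_div_iff₀ ht, hψ0]
        show -c' * t ≤ g (y + t • v) - g y
        nlinarith
      -- pass to the limit
      set dψ : ℝ := 1 / (2 * Real.sqrt (f y - m)) * ⟪u, v⟫ with hdψ
      have hlim : Tendsto (slope ψ 0) (𝓝[>] (0:ℝ)) (𝓝 dψ) :=
        (hasDerivAt_iff_tendsto_slope.1 hψd).mono_left
          (nhdsWithin_mono 0 (fun t ht => (Set.mem_Ioi.1 ht).ne'))
      have hge : -c' ≤ dψ := by
        refine ge_of_tendsto hlim ?_
        filter_upwards [self_mem_nhdsWithin] with t ht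
        have := hslope t (Set.mem_Ioi.1 ht)
        simpa [slope_def_field] using this
      -- derive contradiction
      rw [hdψ, hiv] at hge
      have hgyeq : Real.sqrt (f y - m) = g y := rfl
      rw [hgyeq] at hge
      have h1 : ‖u‖ ≤ 2 * c' * g y := by
        have hs : (0:ℝ) < 2 * g y := by linarith
        have h2 : 1 / (2 * g y) * ‖u‖ ≤ c' := by
          have heq : 1 / (2 * g y) * (-‖u‖) = -(1 / (2 * g y) * ‖u‖) := by ring
          rw [heq] at hge
          exact neg_le_neg_iff.mp hge
        calc ‖u‖ = (2 * g y) * (1 / (2 * g y) * ‖u‖) := by field_simp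
          _ ≤ (2 * g y) * c' := mul_le_mul_of_nonneg_left h2 hs.le
          _ = 2 * c' * g y := by ring
      -- PL contradiction
      have hgsq : g y ^ 2 = f y - m := Real.sq_sqrt (hnn y)
      have hsq2 : ‖u‖ ^ 2 ≤ (2 * c' * g y) ^ 2 := pow_le_pow_left₀ (norm_nonneg u) h1 2
      have hple : f y - m ≤ 1 / (2 * μp) * (4 * c' ^ 2) * (f y - m) := by
        have hpos : (0:ℝ) ≤ 1 / (2 * μp) := by positivity
        calc f y - m ≤ 1 / (2 * μp) * ‖u‖ ^ 2 := hPLy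
          _ ≤ 1 / (2 * μp) * (2 * c' * g y) ^ 2 := mul_le_mul_of_nonneg_left hsq2 hpos
          _ = 1 / (2 * μp) * (4 * c' ^ 2) * g y ^ 2 := by ring
          _ = 1 / (2 * μp) * (4 * c' ^ 2) * (f y - m) := by rw [hgsq]
      have hc'2 : μp / 2 ≤ c' ^ 2 := by
        have h2 : (1:ℝ) ≤ 1 / (2 * μp) * (4 * c' ^ 2) := by
          by_contra hlt
          push_neg at hlt
          have := mul_lt_mul_of_pos_right hlt hfy
          rw [one_mul] at this
          linarith
        rw [div_mul_eq_mul_div, le_div_iff₀ (by linarith : (0:ℝ) < 2 * μp), one_mul] at h2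
        linarith
      have hcc' : c ≤ c' := by
        have h3 : Real.sqrt (μp / 2) ≤ Real.sqrt (c' ^ 2) := Real.sqrt_le_sqrt hc'2
        rw [Real.sqrt_sq hc'0.le] at h3
        exact h3
      linarith
    -- conclude: y is a global minimizer
    have hymem : y ∈ {y | ∀ z, f y ≤ f z} := fun z => hgy0 ▸ hxs z
    have hgyzero : g y = 0 := by simp [hg, hgy0]
    have hydist : c' * dist y x ≤ g x := by
      simp only [hφ, hgyzero, zero_add] at hyx
      exact hyx
    calc c' * d ≤ c' * dist x y :=
          mul_le_mul_of_nonneg_left (Metric.infDist_le_dist_of_mem hymem) hc'0.le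
      _ = c' * dist y x := by rw [dist_comm]
      _ ≤ g x := hydist
  -- from key, deduce c * d ≤ g x
  have hcd : c * d ≤ g x := by
    rcases eq_or_lt_of_le hdnn with hd0 | hdpos
    · rw [← hd0, mul_zero]
      exact Real.sqrt_nonneg (f x - m)
    · by_contra hlt
      push_neg at hlt
      have h1 : g x / d < c := by
        rw [div_lt_iff₀ hdpos]
        nlinarith
      set a : ℝ := max (g x / d) (c / 2) with ha
      have ha0 : 0 < a := lt_of_lt_of_le (half_pos hcpos) (le_max_right _ _)
      have hac : a < c := max_lt h1 (by linarith)
      set c'' : ℝ := (a + c) / 2 with hc''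
      have h2 := key c'' (by linarith) (by linarith)
      have h3 : g x / d < c'' := lt_of_le_of_lt (le_max_left _ _) (by rw [hc'']; linarith)
      have h4 : c'' ≤ g x / d := (le_div_iff₀ hdpos).2 h2
      linarith
  -- square it
  have hgx2 : g x ^ 2 = f x - m := Real.sq_sqrt (hnn x)
  have hcsq : c ^ 2 = μp / 2 := Real.sq_sqrt (by linarith)
  have hsq : (c * d) ^ 2 ≤ g x ^ 2 := by
    have h1 : 0 ≤ c * d := mul_nonneg hcpos.le hdnn
    nlinarith [Real.sqrt_nonneg (f x - m)]
  rw [hgx2] at hsq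
  calc μp / 2 * d ^ 2 = (c * d) ^ 2 := by rw [mul_pow, hcsq]
    _ ≤ f x - m := hsq
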